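/- For any z, G_β(z) is a convex function of β = (β_x, β_y) ∈ (0,∞)², and its partial derivatives are ∂G_β(z)/∂β_x = -(1/2)‖x - x̄_β(z)‖² and ∂G_β(z)/∂β_y = -(1/2)‖y - ȳ_β(z)‖², where z̄_β(z) = (x̄_β(z), ȳ_β(z)) is the maximizer in the definition of G_β(z). -/
import Mathlib

open RealInnerProductSpace

/-- `ℝᵏ` with the Euclidean structure. -/
abbrev Eu (k : ℕ) := EuclideanSpace ℝ (Fin k)

set_option maxHeartbeats 1600000 in
/-- Abstract Danskin-type differentiability lemma. -/
lemma danskin_aux {α : Type*} (φ : ℝ → ℝ) (w : ℝ → α) (c q : α → ℝ)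
    (d : α → α → ℝ) (βx : ℝ) (hβx : 0 < βx)
    (hq : ∀ v, 0 ≤ q v)
    (hd : ∀ u v, 0 ≤ d u v)
    (hδ : ∀ u v, (q u - q v)^2 ≤ d u v * (q u + q v))
    (hV : ∀ t, 0 < t → φ t = c (w t) - t * q (w t))
    (hU : ∀ t, 0 < t → ∀ v, c v - t * q v ≤ φ t)
    (hS : ∀ t, 0 < t → ∀ v, c v - t * q v + t/4 * d (w t) v ≤ φ t) :
    HasDerivAt φ (-q (w βx)) βx := by
  have hβ2 : (0:ℝ) < βx/2 := by linarith
  set A := q (w (βx/2)) with hA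
  have hA0 : 0 ≤ A := hq _
  set a := q (w βx) with ha
  have ha0 : 0 ≤ a := hq _
  have haA : a ≤ A := by
    have h1 := hU βx hβx (w (βx/2))
    have h2 := hU (βx/2) hβ2 (w βx)
    have e1 := hV βx hβx
    have e2 := hV (βx/2) hβ2
    nlinarith
  set K := 8*A/βx + 1 with hK
  have hK0 : 0 < K := by positivity
  have hKβ : K * βx = 8*A + βx := by
    rw [hK]; field_simp
  have key : ∀ t, βx/2 < t →
      0 ≤ φ t - φ βx + (t - βx) * a ∧ φ t - φ βx + (t - βx) * a ≤ K * (t-βx)^2 := by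
    intro t ht
    have ht0 : 0 < t := lt_trans hβ2 ht
    set b := q (w t) with hb
    have hb0 : 0 ≤ b := hq _
    have hbA : b ≤ A := by
      have h1 := hU t ht0 (w (βx/2))
      have h2 := hU (βx/2) hβ2 (w t)
      have e1 := hV t ht0
      have e2 := hV (βx/2) hβ2
      nlinarith
    have e1 := hV t ht0
    have e2 := hV βx hβx
    have i1 := hU t ht0 (w βx)
    have i2 := hS βx hβx (w t)
    set D := d (w βx) (w t) with hD
    have hD0 : 0 ≤ D := hd _ _
    have hdel : (a - b)^2 ≤ D * (a + b) := hδ _ _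
    have lo : 0 ≤ φ t - φ βx + (t - βx) * a := by nlinarith
    have dag : φ t - φ βx + (t - βx) * b + βx/4 * D ≤ 0 := by nlinarith
    set P := (t - βx) * (a - b) with hP
    have hDP : βx * D ≤ 4 * P := by rw [hP]; nlinarith
    have hP0 : 0 ≤ P := by nlinarith [mul_nonneg hβx.le hD0]
    have hi : φ t - φ βx + (t - βx) * a ≤ P := by
      rw [hP]; nlinarith [mul_nonneg hβx.le hD0]
    have s1 : (a-b)^2 * βx ≤ (4*P) * (a+b) := by
      have h6 : (a-b)^2 * βx ≤ (D * (a+b)) * βx :=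
        mul_le_mul_of_nonneg_right hdel hβx.le
      have h7 : (βx*D)*(a+b) ≤ (4*P)*(a+b) :=
        mul_le_mul_of_nonneg_right hDP (by linarith)
      calc (a-b)^2 * βx ≤ (D * (a+b)) * βx := h6
        _ = (βx*D)*(a+b) := by ring
        _ ≤ (4*P)*(a+b) := h7
    have s2 : (4*P)*(a+b) ≤ (4*P)*(2*A) :=
      mul_le_mul_of_nonneg_left (by linarith) (by linarith)
    have s12 : (a-b)^2 * βx ≤ 8*P*A := by
      have := s1.trans s2; linarith [this]
    have hPsq : P^2 * βx ≤ 8 * A * ((t - βx)^2 * P) := by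
      have h8 : (t-βx)^2 * ((a-b)^2*βx) ≤ (t-βx)^2 * (8*P*A) :=
        mul_le_mul_of_nonneg_left s12 (sq_nonneg _)
      have hP2 : P^2*βx = (t-βx)^2*((a-b)^2*βx) := by rw [hP]; ring
      have hR : (t-βx)^2*(8*P*A) = 8*A*((t-βx)^2*P) := by ring
      linarith [h8]
    have hPβ : P * βx ≤ 8 * A * (t - βx)^2 := by
      rcases eq_or_lt_of_le hP0 with h0 | h0
      · rw [← h0, zero_mul]; positivity
      · have h9 : P * (P*βx) ≤ P * (8*A*(t-βx)^2) := by
          calc P*(P*βx) = P^2*βx := by ring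
            _ ≤ 8*A*((t-βx)^2*P) := hPsq
            _ = P*(8*A*(t-βx)^2) := by ring
        exact le_of_mul_le_mul_left h9 h0
    have hPK : P ≤ K * (t - βx)^2 := by
      have hKb2 : (K*(t-βx)^2)*βx = (8*A+βx)*(t-βx)^2 := by
        calc (K*(t-βx)^2)*βx = (K*βx)*(t-βx)^2 := by ring
          _ = (8*A+βx)*(t-βx)^2 := by rw [hKβ]
      have h10 : P*βx ≤ (K*(t-βx)^2)*βx := by
        rw [hKb2]
        have := mul_nonneg hβx.le (sq_nonneg (t-βx))
        nlinarith [hPβ]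
      exact le_of_mul_le_mul_right h10 hβx
    exact ⟨lo, hi.trans hPK⟩
  rw [hasDerivAt_iff_isLittleO, Asymptotics.isLittleO_iff]
  intro ε hε
  rw [Metric.eventually_nhds_iff]
  refine ⟨min (βx/2) (ε/K), lt_min hβ2 (by positivity), fun {t} hyt => ?_⟩
  rw [Real.dist_eq] at hyt
  have h1 : |t - βx| < βx/2 := lt_of_lt_of_le hyt (min_le_left _ _)
  have h2 : |t - βx| < ε/K := lt_of_lt_of_le hyt (min_le_right _ _)
  have htgt : βx/2 < t := by
    have := abs_lt.mp h1
    linarith [this.1]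
  obtain ⟨lo, hi⟩ := key t htgt
  have habs : |φ t - φ βx + (t - βx) * a| ≤ K * (t - βx)^2 := by
    rw [abs_le]
    constructor
    · nlinarith [sq_nonneg (t - βx)]
    · exact hi
  simp only [smul_eq_mul, Real.norm_eq_abs]
  have heq : φ t - φ βx - (t - βx) * -a = φ t - φ βx + (t - βx) * a := by ring
  rw [heq]
  have h3 : |t - βx| * K < ε := (lt_div_iff₀ hK0).mp h2
  calc |φ t - φ βx + (t - βx) * a| ≤ K * (t - βx)^2 := habs
    _ ≤ ε * |t - βx| := by
        have h4 := mul_le_mul_of_nonneg_right h3.le (abs_nonneg (t - βx))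
        nlinarith [sq_abs (t - βx)]

lemma norm_delta_aux {E : Type*} [NormedAddCommGroup E] (p p' : E) :
    (‖p‖^2/2 - ‖p'‖^2/2)^2 ≤ ‖p - p'‖^2 * (‖p‖^2/2 + ‖p'‖^2/2) := by
  have h := abs_norm_sub_norm_le p p'
  have h2 : (‖p‖ - ‖p'‖)^2 ≤ ‖p - p'‖^2 := by
    rw [← sq_abs (‖p‖ - ‖p'‖)]
    exact pow_le_pow_left₀ (abs_nonneg _) h 2
  nlinarith [norm_nonneg p, norm_nonneg p', sq_nonneg (‖p‖ + ‖p'‖),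
    mul_le_mul_of_nonneg_right h2 (sq_nonneg (‖p‖ + ‖p'‖)),
    mul_nonneg (sq_nonneg ‖p - p'‖) (sq_nonneg (‖p‖ - ‖p'‖))]

lemma midpoint_norm_sq_aux {E : Type*} [NormedAddCommGroup E] [InnerProductSpace ℝ E]
    (x v u : E) :
    ‖x - ((1/2 : ℝ) • v + (1/2 : ℝ) • u)‖^2
      = ‖x - v‖^2/2 + ‖x - u‖^2/2 - ‖u - v‖^2/4 := by
  have hx : x - ((1/2 : ℝ) • v + (1/2 : ℝ) • u) = ((1:ℝ)/2) • ((x - v) + (x - u)) := by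
    module
  have hpar := parallelogram_law_with_norm ℝ (x - v) (x - u)
  have hsub : (x - v) - (x - u) = u - v := by abel
  rw [hsub] at hpar
  have hn : ‖x - ((1/2 : ℝ) • v + (1/2 : ℝ) • u)‖ = ‖(x - v) + (x - u)‖ / 2 := by
    rw [hx, norm_smul]
    simp
    ring
  rw [hn]
  ring_nf
  nlinarith [hpar]

/-- The function being maximized. -/
noncomputable def gF {n m : ℕ} (F : Eu n × Eu m → ℝ) (M : Eu n × Eu m →L[ℝ] Eu n × Eu m)
    (z w : Eu n × Eu m) (b1 b2 : ℝ) : ℝ :=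
  F z - F w + (⟪(M z).1, w.1⟫ + ⟪(M z).2, w.2⟫)
    - b1 / 2 * ‖z.1 - w.1‖ ^ 2 - b2 / 2 * ‖z.2 - w.2‖ ^ 2

section main

variable {n m : ℕ} (F : Eu n × Eu m → ℝ) (M : Eu n × Eu m →L[ℝ] Eu n × Eu m)
  (z : Eu n × Eu m) (zbar : ℝ × ℝ → Eu n × Eu m)

lemma gF_val
    (hzbar : ∀ βp : ℝ × ℝ, βp ∈ Set.Ioi (0:ℝ) ×ˢ Set.Ioi (0:ℝ) →
      IsGreatest (Set.range (fun z' : Eu n × Eu m => gF F M z z' βp.1 βp.2))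
        (gF F M z (zbar βp) βp.1 βp.2))
    (b1 b2 : ℝ) (h1 : 0 < b1) (h2 : 0 < b2) :
    (⨆ z' : Eu n × Eu m, gF F M z z' b1 b2) = gF F M z (zbar (b1, b2)) b1 b2 :=
  (hzbar (b1, b2) (Set.mem_prod.mpr ⟨h1, h2⟩)).csSup_eq

lemma gF_le
    (hzbar : ∀ βp : ℝ × ℝ, βp ∈ Set.Ioi (0:ℝ) ×ˢ Set.Ioi (0:ℝ) →
      IsGreatest (Set.range (fun z' : Eu n × Eu m => gF F M z z' βp.1 βp.2))
        (gF F M z (zbar βp) βp.1 βp.2))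
    (b1 b2 : ℝ) (h1 : 0 < b1) (h2 : 0 < b2) (v : Eu n × Eu m) :
    gF F M z v b1 b2 ≤ (⨆ z' : Eu n × Eu m, gF F M z z' b1 b2) := by
  rw [gF_val F M z zbar hzbar b1 b2 h1 h2]
  exact (hzbar (b1, b2) (Set.mem_prod.mpr ⟨h1, h2⟩)).2 ⟨v, rfl⟩

lemma gF_strong (hF : ConvexOn ℝ Set.univ F)
    (hzbar : ∀ βp : ℝ × ℝ, βp ∈ Set.Ioi (0:ℝ) ×ˢ Set.Ioi (0:ℝ) →
      IsGreatest (Set.range (fun z' : Eu n × Eu m => gF F M z z' βp.1 βp.2))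
        (gF F M z (zbar βp) βp.1 βp.2))
    (b1 b2 : ℝ) (h1 : 0 < b1) (h2 : 0 < b2) (v : Eu n × Eu m) :
    gF F M z v b1 b2 + b1/4 * ‖(zbar (b1,b2)).1 - v.1‖^2
      + b2/4 * ‖(zbar (b1,b2)).2 - v.2‖^2 ≤ gF F M z (zbar (b1,b2)) b1 b2 := by
  set u := zbar (b1, b2) with hu
  set mid := (1/2 : ℝ) • v + (1/2 : ℝ) • u with hmid
  have hmle : gF F M z mid b1 b2 ≤ gF F M z u b1 b2 :=
    (hzbar (b1, b2) (Set.mem_prod.mpr ⟨h1, h2⟩)).2 ⟨mid, rfl⟩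
  have hFm : F mid ≤ 1/2 * F v + 1/2 * F u := by
    have h := hF.2 (Set.mem_univ v) (Set.mem_univ u)
      (by norm_num : (0:ℝ) ≤ 1/2) (by norm_num : (0:ℝ) ≤ 1/2) (by norm_num)
    simp only [smul_eq_mul] at h
    rw [hmid]
    exact h
  have hmid1 : mid.1 = (1/2 : ℝ) • v.1 + (1/2 : ℝ) • u.1 := rfl
  have hmid2 : mid.2 = (1/2 : ℝ) • v.2 + (1/2 : ℝ) • u.2 := rfl
  have hin1 : ⟪(M z).1, mid.1⟫ = 1/2 * ⟪(M z).1, v.1⟫ + 1/2 * ⟪(M z).1, u.1⟫ := by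
    rw [hmid1, inner_add_right, real_inner_smul_right, real_inner_smul_right]
  have hin2 : ⟪(M z).2, mid.2⟫ = 1/2 * ⟪(M z).2, v.2⟫ + 1/2 * ⟪(M z).2, u.2⟫ := by
    rw [hmid2, inner_add_right, real_inner_smul_right, real_inner_smul_right]
  have hn1 : ‖z.1 - mid.1‖^2 = ‖z.1 - v.1‖^2/2 + ‖z.1 - u.1‖^2/2 - ‖u.1 - v.1‖^2/4 := by
    rw [hmid1]; exact midpoint_norm_sq_aux z.1 v.1 u.1
  have hn2 : ‖z.2 - mid.2‖^2 = ‖z.2 - v.2‖^2/2 + ‖z.2 - u.2‖^2/2 - ‖u.2 - v.2‖^2/4 := by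
    rw [hmid2]; exact midpoint_norm_sq_aux z.2 v.2 u.2
  simp only [gF] at hmle ⊢
  rw [hin1, hin2, hn1, hn2] at hmle
  nlinarith [hmle, hFm]

end main

set_option maxHeartbeats 1600000 in
/-- For fixed `z`, `β ↦ G_β(z)` is convex on `(0,∞)²` and its partial derivatives are
`∂G_β(z)/∂β_x = -½‖x - x̄_β(z)‖²` and `∂G_β(z)/∂β_y = -½‖y - ȳ_β(z)‖²`, where
`z̄_β(z)` is the maximizer defining `G_β(z)`. -/
theorem smoothed_gap_convex_in_beta {n m : ℕ}
    (F : Eu n × Eu m → ℝ)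
    (hF : ConvexOn ℝ Set.univ F) (hFlsc : LowerSemicontinuous F)
    (M : Eu n × Eu m →L[ℝ] Eu n × Eu m)
    (z : Eu n × Eu m)
    (zbar : ℝ × ℝ → Eu n × Eu m)
    (hzbar : ∀ βp : ℝ × ℝ, βp ∈ Set.Ioi (0:ℝ) ×ˢ Set.Ioi (0:ℝ) →
      IsGreatest (Set.range (fun z' : Eu n × Eu m =>
          F z - F z' + (⟪(M z).1, z'.1⟫ + ⟪(M z).2, z'.2⟫)
            - βp.1 / 2 * ‖z.1 - z'.1‖ ^ 2 - βp.2 / 2 * ‖z.2 - z'.2‖ ^ 2))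
        (F z - F (zbar βp) + (⟪(M z).1, (zbar βp).1⟫ + ⟪(M z).2, (zbar βp).2⟫)
            - βp.1 / 2 * ‖z.1 - (zbar βp).1‖ ^ 2 - βp.2 / 2 * ‖z.2 - (zbar βp).2‖ ^ 2)) :
    ConvexOn ℝ (Set.Ioi (0:ℝ) ×ˢ Set.Ioi (0:ℝ)) (fun βp : ℝ × ℝ =>
        ⨆ z' : Eu n × Eu m,
          (F z - F z' + (⟪(M z).1, z'.1⟫ + ⟪(M z).2, z'.2⟫)
            - βp.1 / 2 * ‖z.1 - z'.1‖ ^ 2 - βp.2 / 2 * ‖z.2 - z'.2‖ ^ 2)) ∧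
    ∀ βx βy : ℝ, 0 < βx → 0 < βy →
      HasDerivAt (fun t : ℝ =>
          ⨆ z' : Eu n × Eu m,
            (F z - F z' + (⟪(M z).1, z'.1⟫ + ⟪(M z).2, z'.2⟫)
              - t / 2 * ‖z.1 - z'.1‖ ^ 2 - βy / 2 * ‖z.2 - z'.2‖ ^ 2))
        (-(1 / 2) * ‖z.1 - (zbar (βx, βy)).1‖ ^ 2) βx ∧
      HasDerivAt (fun t : ℝ =>
          ⨆ z' : Eu n × Eu m,
            (F z - F z' + (⟪(M z).1, z'.1⟫ + ⟪(M z).2, z'.2⟫)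
              - βx / 2 * ‖z.1 - z'.1‖ ^ 2 - t / 2 * ‖z.2 - z'.2‖ ^ 2))
        (-(1 / 2) * ‖z.2 - (zbar (βx, βy)).2‖ ^ 2) βy := by
  have hzbar' : ∀ βp : ℝ × ℝ, βp ∈ Set.Ioi (0:ℝ) ×ˢ Set.Ioi (0:ℝ) →
      IsGreatest (Set.range (fun z' : Eu n × Eu m => gF F M z z' βp.1 βp.2))
        (gF F M z (zbar βp) βp.1 βp.2) := hzbar
  constructor
  · -- convexity in β
    refine ⟨(convex_Ioi (0:ℝ)).prod (convex_Ioi 0), ?_⟩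
    intro p hp q hq α β hα hβ hαβ
    have hp1 : 0 < p.1 := hp.1
    have hp2 : 0 < p.2 := hp.2
    have hq1 : 0 < q.1 := hq.1
    have hq2 : 0 < q.2 := hq.2
    set r := α • p + β • q with hr
    have hr1 : r.1 = α * p.1 + β * q.1 := rfl
    have hr2 : r.2 = α * p.2 + β * q.2 := rfl
    have hrpos1 : 0 < r.1 := by
      rw [hr1]
      rcases eq_or_lt_of_le hα with h | h
      · have hβ1 : β = 1 := by linarith
        rw [← h, hβ1]; simpa using hq1
      · nlinarith [mul_pos h hp1, mul_nonneg hβ hq1.le]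
    have hrpos2 : 0 < r.2 := by
      rw [hr2]
      rcases eq_or_lt_of_le hα with h | h
      · have hβ1 : β = 1 := by linarith
        rw [← h, hβ1]; simpa using hq2
      · nlinarith [mul_pos h hp2, mul_nonneg hβ hq2.le]
    show (⨆ z' : Eu n × Eu m, gF F M z z' r.1 r.2)
        ≤ α • (⨆ z' : Eu n × Eu m, gF F M z z' p.1 p.2)
          + β • (⨆ z' : Eu n × Eu m, gF F M z z' q.1 q.2)
    rw [gF_val F M z zbar hzbar' r.1 r.2 hrpos1 hrpos2]
    set w := zbar (r.1, r.2) with hw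
    have hle1 := gF_le F M z zbar hzbar' p.1 p.2 hp1 hp2 w
    have hle2 := gF_le F M z zbar hzbar' q.1 q.2 hq1 hq2 w
    have hsplit : gF F M z w r.1 r.2
        = α * gF F M z w p.1 p.2 + β * gF F M z w q.1 q.2 := by
      simp only [gF, hr1, hr2]
      linear_combination (-(F z - F w + (⟪(M z).1, w.1⟫ + ⟪(M z).2, w.2⟫))) * hαβ
    rw [hsplit, smul_eq_mul, smul_eq_mul]
    exact add_le_add (mul_le_mul_of_nonneg_left hle1 hα)
      (mul_le_mul_of_nonneg_left hle2 hβ)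
  · intro βx βy hβx hβy
    constructor
    · have heq : (-(1/2 : ℝ) * ‖z.1 - (zbar (βx, βy)).1‖ ^ 2)
          = -(‖z.1 - (zbar (βx, βy)).1‖ ^ 2 / 2) := by ring
      rw [heq]
      exact danskin_aux
        (fun t : ℝ => ⨆ z' : Eu n × Eu m, gF F M z z' t βy)
        (fun t => zbar (t, βy))
        (fun v => F z - F v + (⟪(M z).1, v.1⟫ + ⟪(M z).2, v.2⟫) - βy / 2 * ‖z.2 - v.2‖ ^ 2)
        (fun v => ‖z.1 - v.1‖ ^ 2 / 2)
        (fun u v => ‖u.1 - v.1‖ ^ 2)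
        βx hβx
        (fun v => by positivity)
        (fun u v => by positivity)
        (fun u v => by
          have h := norm_delta_aux (z.1 - u.1) (z.1 - v.1)
          have he : (z.1 - u.1) - (z.1 - v.1) = v.1 - u.1 := by abel
          rw [he, norm_sub_rev v.1 u.1] at h
          exact h)
        (fun t ht => by
          beta_reduce
          rw [gF_val F M z zbar hzbar' t βy ht hβy]
          simp only [gF]; ring)
        (fun t ht v => by
          have hle := gF_le F M z zbar hzbar' t βy ht hβy v
          beta_reduce
          calc (F z - F v + (⟪(M z).1, v.1⟫ + ⟪(M z).2, v.2⟫) - βy / 2 * ‖z.2 - v.2‖ ^ 2)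
              - t * (‖z.1 - v.1‖ ^ 2 / 2) = gF F M z v t βy := by simp only [gF]; ring
            _ ≤ _ := hle)
        (fun t ht v => by
          have hs := gF_strong F M z zbar hF hzbar' t βy ht hβy v
          have hv := gF_val F M z zbar hzbar' t βy ht hβy
          have h2 : (0:ℝ) ≤ βy / 4 * ‖(zbar (t, βy)).2 - v.2‖ ^ 2 := by positivity
          have he : (F z - F v + (⟪(M z).1, v.1⟫ + ⟪(M z).2, v.2⟫) - βy / 2 * ‖z.2 - v.2‖ ^ 2)
              - t * (‖z.1 - v.1‖ ^ 2 / 2) = gF F M z v t βy := by simp only [gF]; ring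
          beta_reduce
          rw [hv]
          linarith [hs, h2, he])
    · have heq : (-(1/2 : ℝ) * ‖z.2 - (zbar (βx, βy)).2‖ ^ 2)
          = -(‖z.2 - (zbar (βx, βy)).2‖ ^ 2 / 2) := by ring
      rw [heq]
      exact danskin_aux
        (fun t : ℝ => ⨆ z' : Eu n × Eu m, gF F M z z' βx t)
        (fun t => zbar (βx, t))
        (fun v => F z - F v + (⟪(M z).1, v.1⟫ + ⟪(M z).2, v.2⟫) - βx / 2 * ‖z.1 - v.1‖ ^ 2)
        (fun v => ‖z.2 - v.2‖ ^ 2 / 2)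
        (fun u v => ‖u.2 - v.2‖ ^ 2)
        βy hβy
        (fun v => by positivity)
        (fun u v => by positivity)
        (fun u v => by
          have h := norm_delta_aux (z.2 - u.2) (z.2 - v.2)
          have he : (z.2 - u.2) - (z.2 - v.2) = v.2 - u.2 := by abel
          rw [he, norm_sub_rev v.2 u.2] at h
          exact h)
        (fun t ht => by
          beta_reduce
          rw [gF_val F M z zbar hzbar' βx t hβx ht]
          simp only [gF]; ring)
        (fun t ht v => by
          have hle := gF_le F M z zbar hzbar' βx t hβx ht v
          beta_reduce
          calc (F z - F v + (⟪(M z).1, v.1⟫ + ⟪(M z).2, v.2⟫) - βx / 2 * ‖z.1 - v.1‖ ^ 2)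
              - t * (‖z.2 - v.2‖ ^ 2 / 2) = gF F M z v βx t := by simp only [gF]; ring
            _ ≤ _ := hle)
        (fun t ht v => by
          have hs := gF_strong F M z zbar hF hzbar' βx t hβx ht v
          have hv := gF_val F M z zbar hzbar' βx t hβx ht
          have h2 : (0:ℝ) ≤ βx / 4 * ‖(zbar (βx, t)).1 - v.1‖ ^ 2 := by positivity
          have he : (F z - F v + (⟪(M z).1, v.1⟫ + ⟪(M z).2, v.2⟫) - βx / 2 * ‖z.1 - v.1‖ ^ 2)
              - t * (‖z.2 - v.2‖ ^ 2 / 2) = gF F M z v βx t := by simp only [gF]; ring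
          beta_reduce
          rw [hv]
          linarith [hs, h2, he])
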